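/- arXiv:1210.1518 — 3 statements merged into one kernel-verified Lean document; each statement's English description precedes it below -/
import Mathlib

section
/- Let H be the group with presentation ⟨a, b, c ∣ a² = b² = c² = (abc)² = 1⟩. Then H is infinite. -/
/-- The relations of `H = ⟨a, b, c ∣ a² = b² = c² = (abc)² = 1⟩`. -/
def hexRels : Set (FreeGroup (Fin 3)) :=
  { (FreeGroup.of 0) ^ 2, (FreeGroup.of 1) ^ 2, (FreeGroup.of 2) ^ 2,
    (FreeGroup.of 0 * FreeGroup.of 1 * FreeGroup.of 2) ^ 2 }

/-- Map generators to the infinite dihedral group. -/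
def hexF : Fin 3 → DihedralGroup 0 :=
  ![DihedralGroup.sr 0, DihedralGroup.sr 1, DihedralGroup.sr 0]

lemma hexF_rels : ∀ r ∈ hexRels, FreeGroup.lift hexF r = 1 := by
  intro r hr
  rcases hr with h | h | h | h <;> subst h <;>
    simp [hexF, DihedralGroup.sr_mul_sr, DihedralGroup.sr_mul_r,
      DihedralGroup.r_mul_sr, pow_two, DihedralGroup.one_def, -DihedralGroup.r_zero]

/-- The group `H = ⟨a, b, c ∣ a² = b² = c² = (abc)² = 1⟩` is infinite. -/
theorem stmt_6 : Infinite (PresentedGroup hexRels) := by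
  apply Infinite.of_injective
    (fun n : ℕ => (PresentedGroup.of (rels := hexRels) 0 * PresentedGroup.of 1) ^ n)
  intro m n h
  have := congrArg (PresentedGroup.toGroup hexF_rels) h
  simp only [map_pow, map_mul, PresentedGroup.toGroup.of] at this
  have h2 : (DihedralGroup.r 1 : DihedralGroup 0) ^ m = DihedralGroup.r 1 ^ n := by
    simpa [hexF, DihedralGroup.sr_mul_sr] using this
  rw [DihedralGroup.r_one_pow, DihedralGroup.r_one_pow] at h2
  have : ((m : ZMod 0) = (n : ZMod 0)) := by
    injection h2
  exact_mod_cast this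
end

section
/- Let G be the group with presentation on six generators a₁,…,a₆ with relations aᵢ² = 1 for all i, aᵢaⱼ = aⱼaᵢ whenever i and j have opposite parity, and (a₁a₃a₅)² = (a₂a₄a₆)² = 1. Then G is isomorphic to H × H, where H = ⟨a, b, c ∣ a² = b² = c² = (abc)² = 1⟩. -/
/-- The relations of the group `G` on six generators `a₁,…,a₆` (indexed by
`0,…,5`): each generator is an involution, generators of opposite parity
commute, and `(a₁a₃a₅)² = (a₂a₄a₆)² = 1`. -/
def gRels : Set (FreeGroup (Fin 6)) :=
  { w | (∃ i : Fin 6, w = (FreeGroup.of i) ^ 2) ∨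
        (∃ i j : Fin 6, i.val % 2 ≠ j.val % 2 ∧
          w = FreeGroup.of i * FreeGroup.of j * (FreeGroup.of i)⁻¹ * (FreeGroup.of j)⁻¹) ∨
        w = (FreeGroup.of 0 * FreeGroup.of 2 * FreeGroup.of 4) ^ 2 ∨
        w = (FreeGroup.of 1 * FreeGroup.of 3 * FreeGroup.of 5) ^ 2 }

namespace Stmt7

open scoped commutatorElement

abbrev G' := PresentedGroup gRels
abbrev H' := PresentedGroup hexRels

lemma grel_one {r : FreeGroup (Fin 6)} (h : r ∈ gRels) : PresentedGroup.mk gRels r = 1 :=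
  (QuotientGroup.eq_one_iff r).mpr (Subgroup.subset_normalClosure h)

lemma hrel_one {r : FreeGroup (Fin 3)} (h : r ∈ hexRels) : PresentedGroup.mk hexRels r = 1 :=
  (QuotientGroup.eq_one_iff r).mpr (Subgroup.subset_normalClosure h)

lemma g_sq (i : Fin 6) : (PresentedGroup.of (rels := gRels) i) ^ 2 = 1 := by
  have := grel_one (Or.inl ⟨i, rfl⟩)
  rwa [map_pow] at this

lemma g_comm (i j : Fin 6) (h : i.val % 2 ≠ j.val % 2) :
    Commute (PresentedGroup.of (rels := gRels) i) (PresentedGroup.of (rels := gRels) j) := by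
  have := grel_one (Or.inr (Or.inl ⟨i, j, h, rfl⟩))
  rw [map_mul, map_mul, map_inv, map_inv] at this
  have h2 : ⁅(PresentedGroup.of (rels := gRels) i), (PresentedGroup.of (rels := gRels) j)⁆ = 1 :=
    this
  exact commutatorElement_eq_one_iff_commute.mp h2

lemma g_even : ((PresentedGroup.of 0 : G') * PresentedGroup.of 2 * PresentedGroup.of 4) ^ 2 = 1 := by
  have := grel_one (Or.inr (Or.inr (Or.inl rfl)))
  rwa [map_pow, map_mul, map_mul] at this

lemma g_odd : ((PresentedGroup.of 1 : G') * PresentedGroup.of 3 * PresentedGroup.of 5) ^ 2 = 1 := by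
  have := grel_one (Or.inr (Or.inr (Or.inr rfl)))
  rwa [map_pow, map_mul, map_mul] at this

lemma h_sq0 : (PresentedGroup.of (rels := hexRels) 0) ^ 2 = 1 := by
  have := hrel_one (Or.inl rfl)
  rwa [map_pow] at this

lemma h_sq1 : (PresentedGroup.of (rels := hexRels) 1) ^ 2 = 1 := by
  have := hrel_one (Or.inr (Or.inl rfl))
  rwa [map_pow] at this

lemma h_sq2 : (PresentedGroup.of (rels := hexRels) 2) ^ 2 = 1 := by
  have := hrel_one (Or.inr (Or.inr (Or.inl rfl)))
  rwa [map_pow] at this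

lemma h_abc : ((PresentedGroup.of 0 : H') * PresentedGroup.of 1 * PresentedGroup.of 2) ^ 2 = 1 := by
  have := hrel_one (Or.inr (Or.inr (Or.inr rfl)))
  rwa [map_pow, map_mul, map_mul] at this

/-- The map on generators defining `G → H × H`. -/
def fG : Fin 6 → H' × H' :=
  ![(PresentedGroup.of 0, 1), (1, PresentedGroup.of 0),
    (PresentedGroup.of 1, 1), (1, PresentedGroup.of 1),
    (PresentedGroup.of 2, 1), (1, PresentedGroup.of 2)]

lemma fG0 : fG 0 = (PresentedGroup.of 0, 1) := rfl
lemma fG1 : fG 1 = (1, PresentedGroup.of 0) := rfl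
lemma fG2 : fG 2 = (PresentedGroup.of 1, 1) := rfl
lemma fG3 : fG 3 = (1, PresentedGroup.of 1) := rfl
lemma fG4 : fG 4 = (PresentedGroup.of 2, 1) := rfl
lemma fG5 : fG 5 = (1, PresentedGroup.of 2) := rfl

lemma comm_left_right (x y : H') : Commute ((x, 1) : H' × H') ((1, y) : H' × H') := by
  simp [Commute, SemiconjBy, Prod.ext_iff]

lemma hfG : ∀ r ∈ gRels, FreeGroup.lift fG r = 1 := by
  rintro r (⟨i, rfl⟩ | ⟨i, j, hij, rfl⟩ | rfl | rfl)
  · rw [map_pow, FreeGroup.lift_apply_of]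
    fin_cases i <;>
      simp [fG0, fG1, fG2, fG3, fG4, fG5, Prod.pow_mk, Prod.ext_iff, h_sq0, h_sq1, h_sq2]
  · have hc : Commute (fG i) (fG j) := by
      fin_cases i <;> fin_cases j <;>
        first
        | exact absurd rfl hij
        | exact comm_left_right _ _
        | exact (comm_left_right _ _).symm
    rw [map_mul, map_mul, map_mul, map_inv, map_inv, FreeGroup.lift_apply_of, FreeGroup.lift_apply_of]
    exact commutatorElement_eq_one_iff_commute.mpr hc
  · rw [map_pow, map_mul, map_mul, FreeGroup.lift_apply_of, FreeGroup.lift_apply_of, FreeGroup.lift_apply_of]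
    simp [fG0, fG2, fG4, Prod.pow_mk, Prod.ext_iff, h_abc]
  · rw [map_pow, map_mul, map_mul, FreeGroup.lift_apply_of, FreeGroup.lift_apply_of, FreeGroup.lift_apply_of]
    simp [fG1, fG3, fG5, Prod.pow_mk, Prod.ext_iff, h_abc]

/-- The homomorphism `G → H × H`. -/
def φ : G' →* H' × H' := PresentedGroup.toGroup hfG

def f1 : Fin 3 → G' := ![PresentedGroup.of 0, PresentedGroup.of 2, PresentedGroup.of 4]
def f2 : Fin 3 → G' := ![PresentedGroup.of 1, PresentedGroup.of 3, PresentedGroup.of 5]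

lemma hf1 : ∀ r ∈ hexRels, FreeGroup.lift f1 r = 1 := by
  rintro r (rfl | rfl | rfl | rfl) <;>
    simp only [map_pow, map_mul, FreeGroup.lift_apply_of, f1]
  · simpa using g_sq 0
  · simpa using g_sq 2
  · simpa using g_sq 4
  · simpa using g_even

lemma hf2 : ∀ r ∈ hexRels, FreeGroup.lift f2 r = 1 := by
  rintro r (rfl | rfl | rfl | rfl) <;>
    simp only [map_pow, map_mul, FreeGroup.lift_apply_of, f2]
  · simpa using g_sq 1
  · simpa using g_sq 3
  · simpa using g_sq 5
  · simpa using g_odd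

def ψ₁ : H' →* G' := PresentedGroup.toGroup hf1
def ψ₂ : H' →* G' := PresentedGroup.toGroup hf2

lemma comm_all : ∀ x y : H', Commute (ψ₁ x) (ψ₂ y) := by
  intro x y
  have hx : x ∈ Subgroup.closure (Set.range (PresentedGroup.of : Fin 3 → H')) := by
    rw [PresentedGroup.closure_range_of]; trivial
  have hy : y ∈ Subgroup.closure (Set.range (PresentedGroup.of : Fin 3 → H')) := by
    rw [PresentedGroup.closure_range_of]; trivial
  induction hx using Subgroup.closure_induction with
  | mem a ha =>
    obtain ⟨i, rfl⟩ := ha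
    induction hy using Subgroup.closure_induction with
    | mem b hb =>
      obtain ⟨j, rfl⟩ := hb
      rw [ψ₁, ψ₂, PresentedGroup.toGroup.of, PresentedGroup.toGroup.of]
      fin_cases i <;> fin_cases j <;>
        simp only [f1, f2, Matrix.cons_val_zero, Matrix.cons_val_one, Matrix.head_cons,
          Matrix.cons_val_two, Matrix.tail_cons] <;>
        exact g_comm _ _ (by decide)
    | one => simp [Commute.one_right]
    | mul b c _ _ hb hc => rw [map_mul]; exact hb.mul_right hc
    | inv b _ hb => rw [map_inv]; exact hb.inv_right
  | one => simp [Commute.one_left]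
  | mul a b _ _ ha hb => rw [map_mul]; exact ha.mul_left hb
  | inv a _ ha => rw [map_inv]; exact ha.inv_left

/-- The homomorphism `H × H → G`. -/
def ψ : H' × H' →* G' := ψ₁.noncommCoprod ψ₂ comm_all

lemma phi_of (i : Fin 6) : φ (PresentedGroup.of i) = fG i := by
  rw [φ, PresentedGroup.toGroup.of]

lemma psi1_of (i : Fin 3) : ψ₁ (PresentedGroup.of i) = f1 i := by
  rw [ψ₁, PresentedGroup.toGroup.of]

lemma psi2_of (i : Fin 3) : ψ₂ (PresentedGroup.of i) = f2 i := by
  rw [ψ₂, PresentedGroup.toGroup.of]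

lemma psi_phi : ψ.comp φ = MonoidHom.id G' := by
  apply PresentedGroup.ext
  intro i
  rw [MonoidHom.comp_apply, MonoidHom.id_apply, phi_of]
  fin_cases i
  · show ψ₁ (PresentedGroup.of 0) * ψ₂ 1 = _
    rw [map_one, mul_one, psi1_of]; rfl
  · show ψ₁ 1 * ψ₂ (PresentedGroup.of 0) = _
    rw [map_one, one_mul, psi2_of]; rfl
  · show ψ₁ (PresentedGroup.of 1) * ψ₂ 1 = _
    rw [map_one, mul_one, psi1_of]; rfl
  · show ψ₁ 1 * ψ₂ (PresentedGroup.of 1) = _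
    rw [map_one, one_mul, psi2_of]; rfl
  · show ψ₁ (PresentedGroup.of 2) * ψ₂ 1 = _
    rw [map_one, mul_one, psi1_of]; rfl
  · show ψ₁ 1 * ψ₂ (PresentedGroup.of 2) = _
    rw [map_one, one_mul, psi2_of]; rfl

lemma phi_psi1 : φ.comp ψ₁ = MonoidHom.inl H' H' := by
  apply PresentedGroup.ext
  intro i
  rw [MonoidHom.comp_apply, psi1_of, MonoidHom.inl_apply]
  fin_cases i
  · show φ (PresentedGroup.of 0) = _; rw [phi_of]; exact fG0
  · show φ (PresentedGroup.of 2) = _; rw [phi_of]; exact fG2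
  · show φ (PresentedGroup.of 4) = _; rw [phi_of]; exact fG4

lemma phi_psi2 : φ.comp ψ₂ = MonoidHom.inr H' H' := by
  apply PresentedGroup.ext
  intro i
  rw [MonoidHom.comp_apply, psi2_of, MonoidHom.inr_apply]
  fin_cases i
  · show φ (PresentedGroup.of 1) = _; rw [phi_of]; exact fG1
  · show φ (PresentedGroup.of 3) = _; rw [phi_of]; exact fG3
  · show φ (PresentedGroup.of 5) = _; rw [phi_of]; exact fG5

lemma phi_psi : φ.comp ψ = MonoidHom.id (H' × H') := by
  apply MonoidHom.ext
  rintro ⟨x, y⟩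
  have h1 := DFunLike.congr_fun phi_psi1 x
  have h2 := DFunLike.congr_fun phi_psi2 y
  simp only [MonoidHom.comp_apply, MonoidHom.inl_apply, MonoidHom.inr_apply] at h1 h2
  simp only [MonoidHom.comp_apply, MonoidHom.id_apply, ψ, MonoidHom.noncommCoprod_apply,
    map_mul, h1, h2, Prod.mk_mul_mk, mul_one, one_mul]

end Stmt7

/-- The group `G` presented by the relations above is isomorphic to
`H × H`, where `H = ⟨a, b, c ∣ a² = b² = c² = (abc)² = 1⟩`. -/
theorem stmt_7 :
    Nonempty (PresentedGroup gRels ≃* (PresentedGroup hexRels × PresentedGroup hexRels)) := by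
  exact ⟨MonoidHom.toMulEquiv Stmt7.φ Stmt7.ψ Stmt7.psi_phi Stmt7.phi_psi⟩
end

section
/- Let G be a group with a finite generating set A closed under inverses, and suppose G contains a subgroup T isomorphic to ℤⁿ with n ≥ 2 of finite index. Then the Cayley graph Cayley(G, A) has exactly one end: for every finite set K of vertices there is a finite set K′ ⊇ K whose complement induces a connected subgraph with exactly one infinite component. -/
open Pointwise Relation

namespace Stmt17

variable {G : Type*} [Group G]

/-- generating set with identity adjoined -/
def gset (A : Finset G) : Set G := insert (1:G) (A : Set G)

/-- ball of radius `R` in the word metric, centered at `1` -/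
def ball (A : Finset G) (R : ℕ) : Set G := gset A ^ R

/-- the Cayley graph -/
def cay (A : Finset G) : SimpleGraph G :=
  SimpleGraph.fromRel (fun x y => ∃ a ∈ A, y = x * a)

/-- step relation within a vertex set `W` -/
def stp (A : Finset G) (W : Set G) (p q : G) : Prop :=
  p ∈ W ∧ q ∈ W ∧ (cay A).Adj p q

/-- connectivity within a vertex set `W` -/
def conn (A : Finset G) (W : Set G) : G → G → Prop :=
  Relation.ReflTransGen (stp A W)

variable (A : Finset G)

lemma one_mem_gset : (1:G) ∈ gset A := Set.mem_insert _ _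

lemma ball_finite (R : ℕ) : (ball A R).Finite := by
  induction R with
  | zero => rw [ball, pow_zero]; exact Set.finite_one
  | succ m ih =>
      rw [ball, pow_succ]
      exact Set.Finite.mul ih ((A.finite_toSet).insert 1)

lemma one_mem_ball (R : ℕ) : (1:G) ∈ ball A R := Set.one_mem_pow (one_mem_gset A)

lemma ball_mono {R R' : ℕ} (h : R ≤ R') : ball A R ⊆ ball A R' :=
  Set.pow_subset_pow_right (one_mem_gset A) h

lemma mem_ball_mul {g u : G} {R m : ℕ} (hg : g ∈ ball A R) (hu : u ∈ ball A m) :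
    g * u ∈ ball A (R + m) := by
  rw [ball, pow_add]; exact Set.mul_mem_mul hg hu

lemma mem_ball_zero {u : G} (hu : u ∈ ball A 0) : u = 1 := by
  rw [ball, pow_zero] at hu; exact hu

lemma mem_ball_one {a : G} (ha : a ∈ A) : a ∈ ball A 1 := by
  rw [ball, pow_one]; exact Set.mem_insert_of_mem _ ha

variable {A}
variable (hinv : ∀ a ∈ A, a⁻¹ ∈ A)
include hinv

lemma gset_inv : (gset A)⁻¹ = gset A := by
  ext x
  simp only [Set.mem_inv, gset, Set.mem_insert_iff, Finset.mem_coe, inv_eq_one]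
  constructor
  · rintro (h | h)
    · exact Or.inl h
    · exact Or.inr (by simpa using hinv _ h)
  · rintro (h | h)
    · exact Or.inl h
    · exact Or.inr (by simpa using hinv _ h)

lemma ball_inv {u : G} {R : ℕ} (hu : u ∈ ball A R) : u⁻¹ ∈ ball A R := by
  have : (ball A R)⁻¹ = ball A R := by
    rw [ball, ← inv_pow, gset_inv hinv]
  rw [← this]
  simpa using hu

lemma notin_ball_mul {g u : G} {R m : ℕ} (hg : g ∉ ball A (R + m)) (hu : u ∈ ball A m) :
    g * u ∉ ball A R := by
  intro h
  exact hg (by simpa using mem_ball_mul A h (ball_inv hinv hu))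

lemma exists_ball (hgen : Subgroup.closure (↑A : Set G) = ⊤) (g : G) :
    ∃ R, g ∈ ball A R := by
  have hg : g ∈ Subgroup.closure (↑A : Set G) := by rw [hgen]; trivial
  induction hg using Subgroup.closure_induction with
  | mem a ha => exact ⟨1, mem_ball_one A ha⟩
  | one => exact ⟨0, one_mem_ball A 0⟩
  | mul x y _ _ hx hy =>
      obtain ⟨R1, h1⟩ := hx
      obtain ⟨R2, h2⟩ := hy
      exact ⟨R1 + R2, mem_ball_mul A h1 h2⟩
  | inv x _ hx =>
      obtain ⟨R1, h1⟩ := hx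
      exact ⟨R1, ball_inv hinv h1⟩

omit hinv in
lemma cay_adj_mul {x a : G} (ha : a ∈ A) (ha1 : a ≠ 1) : (cay A).Adj x (x * a) := by
  rw [cay, SimpleGraph.fromRel_adj]
  exact ⟨fun h => ha1 (left_eq_mul.mp h), Or.inl ⟨a, ha, rfl⟩⟩

omit hinv

lemma conn_symm {W : Set G} : Symmetric (conn A W) :=
  fun x y h => (@Relation.ReflTransGen.symmetric _ _ ⟨fun _ _ h => ⟨h.2.1, h.1, h.2.2.symm⟩⟩).symm x y h

lemma conn_mem_right {W : Set G} {x y : G} (h : conn A W x y) (hx : x ∈ W) : y ∈ W := by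
  induction h with
  | refl => exact hx
  | tail _ hbc _ => exact hbc.2.1

include hinv in
lemma conn_mul {R : ℕ} : ∀ (m : ℕ) (u : G), u ∈ ball A m → ∀ g : G, g ∉ ball A (R + m) →
    conn A (ball A R)ᶜ g (g * u) := by
  intro m
  induction m with
  | zero =>
      intro u hu g _
      rw [mem_ball_zero A hu, mul_one]
      exact Relation.ReflTransGen.refl
  | succ m ih =>
      intro u hu g hg
      rw [ball, pow_succ] at hu
      obtain ⟨u', hu', x, hx, rfl⟩ := Set.mem_mul.1 hu
      have hu'' : u' ∈ ball A m := hu'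
      have hg' : g ∉ ball A (R + m) := fun h => hg (ball_mono A (by omega) h)
      have h1 : conn A (ball A R)ᶜ g (g * u') := ih u' hu'' g hg'
      rcases hx with hx1 | hxA
      · subst hx1
        rwa [mul_one]
      · by_cases hx1 : x = 1
        · subst hx1
          rwa [mul_one]
        · refine h1.tail ⟨?_, ?_, ?_⟩
          · exact notin_ball_mul hinv hg' hu''
          · have hux : u' * x ∈ ball A (m + 1) := by
              rw [ball, pow_succ]
              exact Set.mul_mem_mul hu' (Set.mem_insert_of_mem _ hxA : x ∈ gset A)
            exact notin_ball_mul hinv hg hux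
          · rw [← mul_assoc]
            exact cay_adj_mul (Finset.mem_coe.1 hxA) hx1

lemma conn_reachable {s : Set G} {x y : G} (h : conn A s x y) (hx : x ∈ s) (hy : y ∈ s) :
    ((cay A).induce s).Reachable ⟨x, hx⟩ ⟨y, hy⟩ := by
  induction h with
  | refl => exact SimpleGraph.Reachable.refl _
  | @tail b c hxb hbc ih =>
      exact (ih hbc.1).trans (SimpleGraph.Adj.reachable (by simpa using hbc.2.2))


section Grid


variable {n : ℕ}

/-- far from the origin in sup norm -/
def far (M : ℤ) (k : Fin n → ℤ) : Prop := ∃ i, M ≤ |k i|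

/-- grid step relation staying far -/
def gstp (M : ℤ) (p q : Fin n → ℤ) : Prop :=
  far M p ∧ far M q ∧ ∃ i c, (c = (1:ℤ) ∨ c = -1) ∧ q = p + Pi.single i c

lemma gstp_symm (M : ℤ) : Symmetric (gstp (n := n) M) := by
  rintro p q ⟨hp, hq, i, c, hc, rfl⟩
  refine ⟨hq, hp, i, -c, by rcases hc with h | h <;> simp [h], ?_⟩
  funext l
  by_cases h : l = i <;> simp [h, Pi.single_apply]

lemma add_single_eq_update (p : Fin n → ℤ) (j : Fin n) (c : ℤ) :
    p + Pi.single j c = Function.update p j (p j + c) := by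
  funext l
  by_cases h : l = j <;> simp [h, Pi.single_apply, Function.update_apply]

lemma gmove {M : ℤ} {i j : Fin n} (hij : j ≠ i) (v : ℤ) :
    ∀ (N : ℕ) (p : Fin n → ℤ), (p j - v).natAbs = N → M ≤ |p i| →
      Relation.ReflTransGen (gstp M) p (Function.update p j v) := by
  intro N
  induction N with
  | zero =>
      intro p hN _
      have : v = p j := by omega
      rw [this, Function.update_eq_self]
  | succ N ih =>
      intro p hN hpi
      set c : ℤ := if p j < v then 1 else -1 with hc
      have hq : p + Pi.single j c = Function.update p j (p j + c) := add_single_eq_update p j c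
      have hqi : Function.update p j (p j + c) i = p i := Function.update_of_ne (fun h => hij h.symm) _ p
      have hstep : gstp M p (p + Pi.single j c) := by
        refine ⟨⟨i, hpi⟩, ⟨i, by rw [hq, hqi]; exact hpi⟩, j, c, ?_, rfl⟩
        by_cases h : p j < v <;> simp [hc, h]
      have hN' : ((Function.update p j (p j + c)) j - v).natAbs = N := by
        rw [Function.update_self]
        by_cases h : p j < v <;> simp [hc, h] <;> omega
      have htail := ih (Function.update p j (p j + c)) hN' (by rw [hqi]; exact hpi)
      rw [Function.update_idem] at htail
      exact Relation.ReflTransGen.head (hq ▸ hstep) htail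

lemma gfill {M : ℤ} (hM : 1 ≤ M) (i : Fin n) :
    ∀ (s : Finset (Fin n)) (p : Fin n → ℤ), p i = M →
      (∀ l, l ∉ s → l ≠ i → p l = M) →
      Relation.ReflTransGen (gstp M) p (fun _ => M) := by
  intro s
  induction s using Finset.induction with
  | empty =>
      intro p hpi hrest
      have : p = fun _ => M := by
        funext l
        by_cases h : l = i
        · rw [h, hpi]
        · exact hrest l (Finset.notMem_empty l) h
      rw [this]
  | @insert a s ha ih =>
      intro p hpi hrest
      by_cases hcase : a = i ∨ p a = M
      · refine ih p hpi ?_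
        intro l hl hli
        by_cases hla : l = a
        · subst hla
          rcases hcase with h | h
          · exact absurd h hli
          · exact h
        · exact hrest l (by simp [hla, hl]) hli
      · push_neg at hcase
        obtain ⟨hai, haM⟩ := hcase
        have hmv := gmove (M := M) hai M ((p a - M).natAbs) p rfl
          (by rw [hpi]; rw [abs_of_nonneg (by omega)])
        refine hmv.trans (ih (Function.update p a M) ?_ ?_)
        · rw [Function.update_of_ne (fun h : i = a => hai h.symm) _ p]
          exact hpi
        · intro l hl hli
          by_cases hla : l = a
          · subst hla; exact Function.update_self _ _ _
          · rw [Function.update_of_ne hla _ p]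
            exact hrest l (by simp [hla, hl]) hli

lemma gconn {M : ℤ} (hM : 1 ≤ M) (hn : 2 ≤ n) {k : Fin n → ℤ} (hk : far M k) :
    Relation.ReflTransGen (gstp M) k (fun _ => M) := by
  obtain ⟨i, hi⟩ := hk
  have h0 : (0:ℕ) < n := by omega
  have h1 : (1:ℕ) < n := by omega
  set i0 : Fin n := ⟨0, h0⟩
  set i1 : Fin n := ⟨1, h1⟩
  have hne : i0 ≠ i1 := by simp [i0, i1, Fin.ext_iff]
  set j : Fin n := if i = i0 then i1 else i0 with hj
  have hji : j ≠ i := by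
    rw [hj]
    by_cases h : i = i0
    · subst h
      simpa using hne.symm
    · simpa [h] using fun hh => h hh.symm
  -- step 1 : set coordinate j to M, anchored at i
  have h1' := gmove (M := M) hji M ((k j - M).natAbs) k rfl hi
  set k1 := Function.update k j M with hk1
  have hk1j : k1 j = M := Function.update_self _ _ _
  -- step 2 : set coordinate i to M, anchored at j
  have h2' := gmove (M := M) hji.symm M ((k1 i - M).natAbs) k1 rfl
    (by rw [hk1j, abs_of_nonneg (by omega)])
  set k2 := Function.update k1 i M with hk2
  have hk2i : k2 i = M := Function.update_self _ _ _
  -- step 3 : fill the rest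
  have h3' := gfill hM i Finset.univ k2 hk2i (fun l hl _ => absurd (Finset.mem_univ l) hl)
  exact (h1'.trans h2').trans h3'




variable {G : Type*} [Group G] {n : ℕ} {T : Subgroup G}

/-- the standard embedded copy of `ℤⁿ` -/
def grid (eT : T ≃* Multiplicative (Fin n → ℤ)) (k : Fin n → ℤ) : G :=
  (eT.symm (Multiplicative.ofAdd k) : G)

lemma grid_add (eT : T ≃* Multiplicative (Fin n → ℤ)) (k l : Fin n → ℤ) :
    grid eT (k + l) = grid eT k * grid eT l := by
  rw [grid, grid, grid, ofAdd_add, map_mul]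
  rfl

lemma grid_inj (eT : T ≃* Multiplicative (Fin n → ℤ)) : Function.Injective (grid eT) :=
  fun k l h =>
    Multiplicative.ofAdd.injective (eT.symm.injective (Subtype.coe_injective h))

lemma grid_coe (eT : T ≃* Multiplicative (Fin n → ℤ)) (t : T) :
    grid eT (Multiplicative.toAdd (eT t)) = (t : G) := by
  rw [grid, ofAdd_toAdd, MulEquiv.symm_apply_apply]


end Grid
end Stmt17

/-- Let `G` be generated by a finite set `A` closed under inverses
and suppose `G` has a finite-index subgroup `T ≅ ℤⁿ` for some `n ≥ 2`. Then the
Cayley graph of `G` with respect to `A` has exactly one end: every finite set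
`K` of vertices is contained in a finite set `K′` whose complement induces a
connected subgraph (in particular exactly one infinite component). -/
theorem stmt_17 {G : Type*} [Group G] (A : Finset G)
    (hinv : ∀ a ∈ A, a⁻¹ ∈ A) (hgen : Subgroup.closure (↑A : Set G) = ⊤)
    (n : ℕ) (hn : 2 ≤ n) (T : Subgroup G) (hT : T.FiniteIndex)
    (eT : T ≃* Multiplicative (Fin n → ℤ))
    (K : Finset G) :
    ∃ K' : Finset G, K ⊆ K' ∧
      ((SimpleGraph.fromRel (fun x y => ∃ a ∈ A, y = x * a)).induce
        ((↑K' : Set G)ᶜ)).Connected := by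
  classical
  open Stmt17 Relation in
  -- word length
  have hball : ∀ g : G, ∃ R, g ∈ ball A R := exists_ball hinv hgen
  have len_spec : ∀ g : G, g ∈ ball A (Nat.find (hball g)) := fun g => Nat.find_spec (hball g)
  -- radius containing K
  obtain ⟨R, hKR⟩ : ∃ R : ℕ, ∀ g ∈ K, g ∈ ball A R := by
    refine ⟨K.sup (fun g => Nat.find (hball g)), fun g hg => ?_⟩
    exact ball_mono A (Finset.le_sup (f := fun g => Nat.find (hball g)) hg) (len_spec g)
  -- bound on generators of the grid
  obtain ⟨L, hL⟩ : ∃ L : ℕ, ∀ (i : Fin n) (c : ℤ), c = 1 ∨ c = -1 →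
      grid eT (Pi.single i c) ∈ ball A L := by
    refine ⟨Finset.univ.sup (fun i : Fin n =>
      max (Nat.find (hball (grid eT (Pi.single i 1))))
          (Nat.find (hball (grid eT (Pi.single i (-1)))))), fun i c hc => ?_⟩
    have hle := Finset.le_sup (f := fun i : Fin n =>
      max (Nat.find (hball (grid eT (Pi.single i 1))))
          (Nat.find (hball (grid eT (Pi.single i (-1)))))) (Finset.mem_univ i)
    rcases hc with rfl | rfl
    · exact ball_mono A (le_trans (le_max_left _ _) hle) (len_spec _)
    · exact ball_mono A (le_trans (le_max_right _ _) hle) (len_spec _)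
  -- transversal
  haveI := hT
  haveI : Fintype (G ⧸ T) := Fintype.ofFinite _
  obtain ⟨D, hD⟩ : ∃ D : ℕ, ∀ g : G, ∃ (k : Fin n → ℤ) (s : G),
      s ∈ ball A D ∧ g = grid eT k * s := by
    refine ⟨Finset.univ.sup (fun q : G ⧸ T => Nat.find (hball (q.out)⁻¹)), fun g => ?_⟩
    obtain ⟨h, hh⟩ := QuotientGroup.mk_out_eq_mul T g⁻¹
    refine ⟨Multiplicative.toAdd (eT h), ((QuotientGroup.mk (g⁻¹) : G ⧸ T).out)⁻¹, ?_, ?_⟩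
    · exact ball_mono A
        (Finset.le_sup (f := fun q : G ⧸ T => Nat.find (hball (q.out)⁻¹)) (Finset.mem_univ _))
        (len_spec _)
    · rw [grid_coe, hh]
      group
  -- choose M
  obtain ⟨M, hM1, hMfar⟩ : ∃ M : ℤ, 1 ≤ M ∧
      ∀ k : Fin n → ℤ, far M k → grid eT k ∉ ball A (R + (L + D)) := by
    have hFfin : {k : Fin n → ℤ | grid eT k ∈ ball A (R + (L + D))}.Finite :=
      Set.Finite.preimage (Function.Injective.injOn (grid_inj eT))
        (ball_finite A (R + (L + D)))
    obtain ⟨N, hN⟩ : ∃ N : ℕ, N = hFfin.toFinset.sup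
      (fun k => Finset.univ.sup (fun i => (k i).natAbs)) := ⟨_, rfl⟩
    refine ⟨1 + (N : ℤ), ?_, ?_⟩
    · have h0 : (0:ℤ) ≤ (N : ℤ) := Int.natCast_nonneg _
      clear hN
      omega
    · rintro k ⟨i, hi⟩ hmem
      have hkE : k ∈ hFfin.toFinset := (Set.Finite.mem_toFinset hFfin).2 hmem
      have h1 : (k i).natAbs ≤ Finset.univ.sup (fun i => (k i).natAbs) :=
        Finset.le_sup (f := fun i => (k i).natAbs) (Finset.mem_univ i)
      have h2 : Finset.univ.sup (fun i => (k i).natAbs) ≤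
          hFfin.toFinset.sup (fun k => Finset.univ.sup (fun i => (k i).natAbs)) :=
        Finset.le_sup (f := fun k => Finset.univ.sup (fun i => (k i).natAbs)) hkE
      have h3 : ((k i).natAbs : ℤ) ≤ (N : ℤ) := by
        rw [hN]; exact_mod_cast h1.trans h2
      have h4 : |k i| = ((k i).natAbs : ℤ) := Int.abs_eq_natAbs _
      clear hN hkE h1 h2 hmem
      omega
  -- transfer of grid paths into the Cayley graph
  have hTransfer : ∀ p q : Fin n → ℤ, Relation.ReflTransGen (gstp M) p q →
      conn A (ball A R)ᶜ (grid eT p) (grid eT q) := by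
    intro p q h
    induction h with
    | refl => exact Relation.ReflTransGen.refl
    | @tail b c _ hbc ih =>
        obtain ⟨hfb, _, i, cc, hcc, rfl⟩ := hbc
        rw [grid_add]
        refine ih.trans (conn_mul hinv (L + D) _ ?_ _ ?_)
        · exact ball_mono A (Nat.le_add_right L D) (hL i cc hcc)
        · exact hMfar b hfb
  -- the cube of non-far points, and second threshold
  obtain ⟨Θ₂, hΘΘ₂, hΘ₂far⟩ : ∃ Θ₂ : ℕ, R + (L + D) ≤ Θ₂ ∧
      ∀ k : Fin n → ℤ, grid eT k ∉ ball A Θ₂ → far M k := by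
    have hcube : {k : Fin n → ℤ | ¬ far M k}.Finite := by
      refine Set.Finite.subset (Set.Finite.pi (fun _ : Fin n => Set.finite_Icc (-M) M)) ?_
      intro k hk
      simp only [Set.mem_setOf_eq, far, not_exists, not_le] at hk
      intro i _
      have h5 := hk i
      exact Set.mem_Icc.2 (abs_le.mp h5.le)
    refine ⟨max (R + (L + D)) (hcube.toFinset.sup (fun k => Nat.find (hball (grid eT k)))),
      le_max_left _ _, ?_⟩
    intro k hk
    by_contra hfar
    refine hk (ball_mono A (le_trans ?_ (le_max_right _ _)) (len_spec (grid eT k)))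
    exact Finset.le_sup (f := fun k => Nat.find (hball (grid eT k)))
      ((Set.Finite.mem_toFinset hcube).2 hfar)
  -- base point and component
  have hfbase : far M (fun _ => M) :=
    ⟨(⟨0, Nat.lt_of_lt_of_le Nat.zero_lt_two hn⟩ : Fin n),
      le_of_eq (abs_of_nonneg (show (0:ℤ) ≤ M by omega)).symm⟩
  set base : G := grid eT (fun _ => M) with hbasedef
  set C₀ : Set G := {g | conn A (ball A R)ᶜ base g} with hC₀def
  have hbaseC₀ : base ∈ C₀ := Relation.ReflTransGen.refl
  have hbaseR : base ∈ (ball A R)ᶜ := by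
    intro h
    exact hMfar _ hfbase (ball_mono A (Nat.le_add_right _ _) h)
  have hC₀sub : C₀ ⊆ (ball A R)ᶜ := fun g hg => conn_mem_right hg hbaseR
  -- every far-away vertex lies in C₀
  have hBC : ∀ g : G, g ∉ ball A (Θ₂ + D) → g ∈ C₀ := by
    intro g hg
    obtain ⟨k, s, hs, rfl⟩ := hD g
    have hk2 : grid eT k ∉ ball A Θ₂ := fun h => hg (mem_ball_mul A h hs)
    have hfk : far M k := hΘ₂far k hk2
    have hp1 : conn A (ball A R)ᶜ base (grid eT k) :=
      hTransfer _ _ ((@Relation.ReflTransGen.symmetric _ _ ⟨fun _ _ h => gstp_symm M h⟩).symm _ _ (gconn hM1 hn hfk))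
    have hkΘ : grid eT k ∉ ball A (R + (L + D)) := fun h => hk2 (ball_mono A hΘΘ₂ h)
    have hp2 : conn A (ball A R)ᶜ (grid eT k) (grid eT k * s) :=
      conn_mul hinv (L + D) s (ball_mono A (Nat.le_add_left D L) hs) _ hkΘ
    exact hp1.trans hp2
  -- the enlarged finite set
  refine ⟨(ball_finite A (Θ₂ + D)).toFinset.filter (fun g => g ∉ C₀), ?_, ?_⟩
  · intro g hg
    have hRD : R ≤ Θ₂ + D := by omega
    have h1 : g ∈ ball A (Θ₂ + D) := ball_mono A hRD (hKR g hg)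
    have h2 : g ∉ C₀ := fun h => hC₀sub h (hKR g hg)
    exact Finset.mem_filter.2 ⟨(Set.Finite.mem_toFinset _).2 h1, h2⟩
  · have hcompl : ((↑((ball_finite A (Θ₂ + D)).toFinset.filter (fun g => g ∉ C₀)) : Set G))ᶜ
        = C₀ := by
      ext g
      simp only [Set.mem_compl_iff, Finset.coe_filter, Set.mem_setOf_eq,
        Set.Finite.mem_toFinset, not_and, not_not]
      constructor
      · intro h
        by_cases hb : g ∈ ball A (Θ₂ + D)
        · exact h hb
        · exact hBC g hb
      · intro h hb
        exact h
    show ((cay A).induce _).Connected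
    rw [hcompl]
    -- membership in C₀ propagates along steps
    have hprop : ∀ x y : G, conn A (ball A R)ᶜ x y → x ∈ C₀ → y ∈ C₀ := by
      intro x y h hx
      induction h with
      | refl => exact hx
      | @tail b c hxb hbc ih => exact Relation.ReflTransGen.tail ih hbc
    have hup : ∀ x y : G, conn A (ball A R)ᶜ x y → x ∈ C₀ → conn A C₀ x y := by
      intro x y h hx
      induction h with
      | refl => exact Relation.ReflTransGen.refl
      | @tail b c hxb hbc ih =>
          have hbC : b ∈ C₀ := hprop x b hxb hx
          have hcC : c ∈ C₀ := Relation.ReflTransGen.tail hbC hbc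
          exact Relation.ReflTransGen.tail ih ⟨hbC, hcC, hbc.2.2⟩
    haveI : Nonempty (↑C₀) := ⟨⟨base, hbaseC₀⟩⟩
    refine ⟨fun x y => ?_⟩
    obtain ⟨x, hx⟩ := x
    obtain ⟨y, hy⟩ := y
    have hxy : conn A (ball A R)ᶜ x y := (conn_symm hx).trans hy
    exact conn_reachable (hup x y hxy hx) hx hy
end
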